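/- Let x_1,…,x_T ∈ ℝ^p with ‖x_t‖₂ ≤ L for all t, λ > 0, and A_t = λI + Σ_{s=1}^{t} x_s x_s⊤. Then Σ_{t=1}^{T} min{‖x_t‖²_{A_{t−1}⁻¹}, 1} ≤ 2 log(det(A_T)/det(λI)), where A_0 = λI and ‖x‖²_M = x⊤Mx. -/

import Mathlib

open Matrix

-- min(u,1) ≤ 2 log(1+u) for u ≥ 0
lemma min_le_two_log {u : ℝ} (hu : 0 ≤ u) : min u 1 ≤ 2 * Real.log (1 + u) := by
  have hlog2 : (1:ℝ)/2 ≤ Real.log 2 := by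
    have := Real.log_two_gt_d9; linarith
  rcases le_or_gt u 1 with h | h
  · rw [min_eq_left h]
    have hc := strictConcaveOn_log_Ioi.concaveOn.2
      (show (1:ℝ) ∈ Set.Ioi (0:ℝ) by norm_num)
      (show (2:ℝ) ∈ Set.Ioi (0:ℝ) by norm_num)
      (show (0:ℝ) ≤ 1 - u by linarith) hu (show (1-u) + u = 1 by ring)
    simp only [smul_eq_mul, Real.log_one, mul_zero, zero_add, mul_one] at hc
    have h12 : 1 - u + u * 2 = 1 + u := by ring
    rw [h12] at hc
    nlinarith
  · rw [min_eq_right h.le]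
    have : Real.log 2 ≤ Real.log (1 + u) :=
      Real.log_le_log (by norm_num) (by linarith)
    linarith

lemma vecMulVec_posSemidef {p : ℕ} (v : Fin p → ℝ) :
    (Matrix.vecMulVec v v).PosSemidef := by
  have h := Matrix.posSemidef_conjTranspose_mul_self (Matrix.replicateRow Unit v)
  have : (Matrix.replicateRow Unit v)ᴴ * Matrix.replicateRow Unit v = Matrix.vecMulVec v v := by
    ext i j
    simp [Matrix.vecMulVec_apply, Matrix.mul_apply, Matrix.conjTranspose_apply, mul_comm]
  rwa [this] at h

lemma smul_one_posDef {p : ℕ} {lam : ℝ} (hlam : 0 < lam) :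
    (lam • (1 : Matrix (Fin p) (Fin p) ℝ)).PosDef := by
  rw [Matrix.posDef_iff_dotProduct_mulVec]
  constructor
  · show (lam • (1 : Matrix (Fin p) (Fin p) ℝ))ᴴ = _
    rw [Matrix.conjTranspose_smul, Matrix.conjTranspose_one]
    simp
  · intro y hy
    have : star y ⬝ᵥ (lam • (1 : Matrix (Fin p) (Fin p) ℝ)) *ᵥ y = lam * (y ⬝ᵥ y) := by
      simp [Matrix.smul_mulVec, dotProduct_smul, star_trivial]
    rw [this]
    have : 0 < y ⬝ᵥ y := by
      obtain ⟨i, hi⟩ := Function.ne_iff.mp hy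
      have hpos : 0 < y i * y i := mul_self_pos.mpr hi
      have := Finset.sum_pos' (s := Finset.univ) (f := fun i => y i * y i)
        (fun j _ => mul_self_nonneg (y j)) ⟨i, Finset.mem_univ i, hpos⟩
      simpa [dotProduct] using this
    positivity

/-- Elliptical potential lemma: with A_t = λI + Σ_{s<t} x_s x_sᵀ and ‖x_t‖₂ ≤ L,
    Σ_{t<T} min(‖x_t‖²_{A_t⁻¹}, 1) ≤ 2 log(det A_T / det(λI)). -/
theorem elliptical_potential (p T : ℕ) (lam L : ℝ) (hlam : 0 < lam)
    (x : ℕ → Fin p → ℝ) (hx : ∀ t, Real.sqrt (x t ⬝ᵥ x t) ≤ L)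
    (A : ℕ → Matrix (Fin p) (Fin p) ℝ)
    (hA : ∀ t, A t = lam • 1 + ∑ s ∈ Finset.range t, Matrix.vecMulVec (x s) (x s)) :
    ∑ t ∈ Finset.range T, min (x t ⬝ᵥ (A t)⁻¹ *ᵥ x t) 1 ≤
      2 * Real.log ((A T).det / (lam • (1 : Matrix (Fin p) (Fin p) ℝ)).det) := by
  -- positive definiteness
  have hPD : ∀ t, (A t).PosDef := by
    intro t
    rw [hA t]
    refine (smul_one_posDef hlam).add_posSemidef ?_
    refine Finset.sum_induction _ _ (fun a b ha hb => ha.add hb) Matrix.PosSemidef.zero ?_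
    intro s _
    exact vecMulVec_posSemidef (x s)
  have hdetpos : ∀ t, 0 < (A t).det := fun t => (hPD t).det_pos
  -- quadratic form nonneg
  set u : ℕ → ℝ := fun t => x t ⬝ᵥ (A t)⁻¹ *ᵥ x t with hu
  have hunn : ∀ t, 0 ≤ u t := by
    intro t
    have := ((hPD t).inv).posSemidef.dotProduct_mulVec_nonneg (x t)
    simpa using this
  -- determinant recursion
  have hdet : ∀ t, (A (t + 1)).det = (A t).det * (1 + u t) := by
    intro t
    have hAsucc : A (t + 1) = A t + Matrix.vecMulVec (x t) (x t) := by
      rw [hA (t + 1), hA t, Finset.sum_range_succ, add_assoc]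
    rw [hAsucc, Matrix.vecMulVec_eq Unit,
      Matrix.det_add_replicateCol_mul_replicateRow (isUnit_iff_ne_zero.mpr (hdetpos t).ne') (x t) (x t)]
    congr 1
    rw [Matrix.mul_assoc, ← Matrix.replicateCol_mulVec, Matrix.replicateRow_mul_replicateCol, Matrix.det_unique]
    simp [Matrix.one_apply, u]
  -- logs
  have hlog : ∀ t, Real.log (1 + u t) =
      Real.log (A (t + 1)).det - Real.log (A t).det := by
    intro t
    have h1u : 0 < 1 + u t := by have := hunn t; linarith
    rw [hdet t, Real.log_mul (hdetpos t).ne' h1u.ne']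
    ring
  have hA0 : A 0 = lam • (1 : Matrix (Fin p) (Fin p) ℝ) := by
    rw [hA 0]; simp
  calc ∑ t ∈ Finset.range T, min (u t) 1
      ≤ ∑ t ∈ Finset.range T, 2 * Real.log (1 + u t) :=
        Finset.sum_le_sum fun t _ => min_le_two_log (hunn t)
    _ = 2 * ∑ t ∈ Finset.range T,
          (Real.log (A (t + 1)).det - Real.log (A t).det) := by
        rw [Finset.mul_sum]
        exact Finset.sum_congr rfl fun t _ => by rw [hlog t]
    _ = 2 * (Real.log (A T).det - Real.log (A 0).det) := by
        rw [Finset.sum_range_sub (fun t => Real.log (A t).det)]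
    _ = 2 * Real.log ((A T).det / (lam • (1 : Matrix (Fin p) (Fin p) ℝ)).det) := by
        rw [Real.log_div (hdetpos T).ne' (by rw [← hA0]; exact (hdetpos 0).ne'), hA0]
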